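/- There are mutual surjections between N_1 and 𝒫(ω), i.e. |N_1| ≈ |𝒫(ω)|. Consequently, a nonzero von Neumann ordinal belongs to N_2 if and only if it is a surjective image of 𝒫(ω); that is, the set of ordinals belonging to N_2 equals Θ, the least ordinal that is not a surjective image of 𝒫(ω). -/

import Mathlib

namespace NairianModels

open ZFSet

/-! ## Basic cardinality notions -/

/-- `f` codes a surjection from `X` onto `Y`: a set of Kuratowski ordered pairs that is a
function with domain `X` and values in `Y`, every element of `Y` being a value. -/
def ZFSurj (X Y f : ZFSet) : Prop :=
  ZFSet.IsFunc X Y f ∧ ∀ y ∈ Y, ∃ x ∈ X, ZFSet.pair x y ∈ f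

/-- `|X| ≲ |Y|`: either `X = ∅` or there is a surjection from `Y` onto `X`. -/
def CardLE (X Y : ZFSet) : Prop :=
  X = ∅ ∨ ∃ f, ZFSurj Y X f

/-- `|X| ≈ |Y|`. -/
def CardEq (X Y : ZFSet) : Prop :=
  CardLE X Y ∧ CardLE Y X

/-- `X` is a maximal cardinality of `M`: `X ∈ M` and every nonempty `Y ∈ M` is the image of a
surjection from `X` that belongs to `M`. -/
def IsMaxCard (X M : ZFSet) : Prop :=
  X ∈ M ∧ ∀ Y ∈ M, Y = ∅ ∨ ∃ f ∈ M, ZFSurj X Y f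

/-- `M` is of successor type: it has a maximal cardinality. -/
def SuccType (M : ZFSet) : Prop :=
  ∃ X, IsMaxCard X M

/-! ## Fullness -/

def TransClosed (M : ZFSet) : Prop :=
  ∀ Y ∈ M, ∃ Z ∈ M, Z.IsTransitive ∧ Z ⊆ M ∧ Y ∈ Z

def ProdClosed (M : ZFSet) : Prop :=
  ∀ X ∈ M, ∀ Y ∈ M, ZFSet.prod X Y ∈ M

def SubsetClosed (M : ZFSet) : Prop :=
  ∀ X ∈ M, ZFSet.powerset X ⊆ M

def Full (M : ZFSet) : Prop :=
  TransClosed M ∧ ProdClosed M ∧ SubsetClosed M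

/-! ## Ordinals, strong regularity, hierarchicality, H-likeness -/

/-- von Neumann ordinal: a transitive set linearly ordered by `∈`. -/
def IsOrd (x : ZFSet) : Prop :=
  x.IsTransitive ∧
    (∀ y ∈ x, ∀ z ∈ x, y ∈ z ∨ y = z ∨ z ∈ y) ∧
    (∀ a ∈ x, ∀ b ∈ x, ∀ c ∈ x, a ∈ b → b ∈ c → a ∈ c)

/-- limit (von Neumann) ordinal: a nonempty ordinal with no largest element. -/
def IsLimitOrd (x : ZFSet) : Prop :=
  IsOrd x ∧ x ≠ ∅ ∧ ∀ y ∈ x, ∃ z ∈ x, y ∈ z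

/-- `M` is strongly regular: any (set-coded) function from an `X ∈ M` to the ordinals
belonging to `M` is bounded by an ordinal in `M`. -/
def StronglyRegular (M : ZFSet) : Prop :=
  ∀ X ∈ M, ∀ f : ZFSet,
    (∀ p ∈ f, ∃ x ∈ X, ∃ o, IsOrd o ∧ o ∈ M ∧ p = ZFSet.pair x o) →
    (∀ x ∈ X, ∃ o, ZFSet.pair x o ∈ f) →
    (∀ x ∈ X, ∀ o o', ZFSet.pair x o ∈ f → ZFSet.pair x o' ∈ f → o = o') →
    ∃ β, IsOrd β ∧ β ∈ M ∧ ∀ x ∈ X, ∀ o, ZFSet.pair x o ∈ f → o ∈ β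

/-- `M` is hierarchical: it is the continuous increasing union, along the ordinals belonging
to `M`, of transitive sets belonging to `M`. -/
def Hierarchical (M : ZFSet) : Prop :=
  ∃ F : ZFSet → ZFSet,
    (∀ α, IsOrd α → α ∈ M → (F α).IsTransitive ∧ F α ∈ M) ∧
    (∀ α β, IsOrd α → IsOrd β → α ∈ M → β ∈ M → α ∈ β → F α ⊆ F β) ∧
    (∀ β, IsLimitOrd β → β ∈ M → ∀ x, x ∈ F β ↔ ∃ α ∈ β, x ∈ F α) ∧
    (∀ x, x ∈ M ↔ ∃ α, IsOrd α ∧ α ∈ M ∧ x ∈ F α)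

/-- `M` is H-like: transitive, full, hierarchical, and strongly regular in case it is of
successor type. -/
def HLike (M : ZFSet) : Prop :=
  M.IsTransitive ∧ Full M ∧ Hierarchical M ∧ (SuccType M → StronglyRegular M)

/-! ## Transitive closure and the classes `H_X` -/

/-- Iterated unions: `iterUnion x n = ⋃ⁿ x`. -/
def iterUnion (x : ZFSet) : ℕ → ZFSet
  | 0 => x
  | n + 1 => ZFSet.sUnion (iterUnion x n)

/-- The transitive closure of `x` (the least transitive set including `x`):
`x ∪ ⋃x ∪ ⋃⋃x ∪ ⋯`. -/
noncomputable def transCl (x : ZFSet) : ZFSet :=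
  ZFSet.sUnion (ZFSet.range fun n : ℕ => iterUnion x n)

/-- `Y ∈ H_X`: there is a surjection from `X` onto the transitive closure of `{Y}`. -/
def MemH (X Y : ZFSet) : Prop :=
  ∃ f, ZFSurj X (transCl ({Y} : ZFSet)) f

/-! ## First-order logic over `(W, ∈)` -/

/-- Formulas of the language of set theory, with variables indexed by `ℕ`. -/
inductive Fml : Type
  | mem : ℕ → ℕ → Fml
  | equal : ℕ → ℕ → Fml
  | not : Fml → Fml
  | and : Fml → Fml → Fml
  | ex : ℕ → Fml → Fml

/-- Satisfaction of a formula in the structure `(D, ∈)` under the assignment `v`. -/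
def Sat (D : ZFSet) : Fml → (ℕ → ZFSet) → Prop
  | .mem i j, v => v i ∈ v j
  | .equal i j, v => v i = v j
  | .not φ, v => ¬ Sat D φ v
  | .and φ ψ, v => Sat D φ v ∧ Sat D ψ v
  | .ex n φ, v => ∃ a, a ∈ D ∧ Sat D φ (Function.update v n a)

/-- `(X, ∈)` is an elementary substructure of `(W, ∈)`. -/
def ElemSub (X W : ZFSet) : Prop :=
  X ⊆ W ∧ ∀ (φ : Fml) (v : ℕ → ZFSet), (∀ n, v n ∈ X) → (Sat X φ v ↔ Sat W φ v)

/-- `π` is an elementary embedding of `(M, ∈)` into `(W, ∈)`. -/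
def IsElemEmb (M W : ZFSet) (π : ZFSet → ZFSet) : Prop :=
  (∀ x ∈ M, π x ∈ W) ∧
    ∀ (φ : Fml) (v : ℕ → ZFSet), (∀ n, v n ∈ M) →
      (Sat M φ v ↔ Sat W φ fun n => π (v n))

/-- `M` is `X`-closed: `X ∪ {X} ⊆ M` and every (set-coded) function from `X` into `M`
belongs to `M`. -/
def XClosed (X M : ZFSet) : Prop :=
  X ⊆ M ∧ X ∈ M ∧ ∀ f, ZFSet.IsFunc X M f → f ∈ M

/-- `M` is definably closed: any subset of a transitive `N ∈ M` definable over `(N, ∈)` with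
parameters in `N` belongs to `M`. -/
def DefClosed (M : ZFSet) : Prop :=
  ∀ N, N ∈ M → N.IsTransitive →
    ∀ (φ : Fml) (v : ℕ → ZFSet), (∀ n, v n ∈ N) →
      ∀ A : ZFSet, (∀ y, y ∈ A ↔ y ∈ N ∧ Sat N φ (Function.update v 0 y)) → A ∈ M

/-- The reflection principle `ref(X, Y, Z)`. -/
def Ref (X Y Z : ZFSet) : Prop :=
  ∀ W a : ZFSet, W.IsTransitive → XClosed X W → Y ∈ W → a ∈ W →
    ∃ (M : ZFSet) (π : ZFSet → ZFSet),
      M.IsTransitive ∧ IsElemEmb M W π ∧ ({X, Y} : ZFSet) ∈ M ∧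
      (∃ x ∈ M, π x = a) ∧ M ∈ Z ∧
      (∀ z, z ∈ X ∨ z ∈ Y ∨ z = X ∨ z = Y → π z = z) ∧ XClosed X M

/-! ## The N-hierarchy -/

/-- Hereditarily finite sets. -/
def HFin : ZFSet → Prop :=
  ZFSet.mem_wf.fix (C := fun _ => Prop) fun x IH =>
    x.toSet.Finite ∧ ∀ y, ∀ h : y ∈ x, IH y h

/-- `F` is the N-hierarchy: `F 0` is the set of hereditarily finite sets, `F 1 = H_{F 0}`,
`F (α+2) = H_{F (α+1)}`, and for limit `α`, `F α = ⋃_{β<α} F β` and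
`F (α+1) = H_{𝒫(F α)}`. -/
def IsNHierarchy (F : Ordinal → ZFSet) : Prop :=
  (∀ Y, Y ∈ F 0 ↔ HFin Y) ∧
  (∀ Y, Y ∈ F 1 ↔ MemH (F 0) Y) ∧
  (∀ α : Ordinal, ∀ Y, Y ∈ F (α + 2) ↔ MemH (F (α + 1)) Y) ∧
  (∀ α : Ordinal, Order.IsSuccLimit α →
    (∀ Y, Y ∈ F α ↔ ∃ β < α, Y ∈ F β) ∧
    (∀ Y, Y ∈ F (α + 1) ↔ MemH (ZFSet.powerset (F α)) Y))

/-! ## Auxiliary product constructions -/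

/-- Left-nested cartesian product `Y 0 × Y 1 × ⋯ × Y n`. -/
def nestedProd (Y : ℕ → ZFSet) : ℕ → ZFSet
  | 0 => Y 0
  | n + 1 => ZFSet.prod (nestedProd Y n) (Y (n + 1))

/-- Left-nested cartesian power `X^n` (with junk value `∅` at `n = 0`). -/
def nPow (X : ZFSet) : ℕ → ZFSet
  | 0 => ∅
  | 1 => X
  | n + 2 => ZFSet.prod (nPow X (n + 1)) X

/-- `W` is `<κ`-closed: every function from an ordinal `η < κ` into `W` belongs to `W`. -/
def LtClosed (κ W : ZFSet) : Prop :=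
  ∀ η ∈ κ, ∀ f, ZFSet.IsFunc η W f → f ∈ W

open Cardinal

universe u

lemma mem_toSet (a x : ZFSet.{u}) : a ∈ x.toSet ↔ a ∈ x := Iff.rfl

lemma toSet_empty : toSet (∅ : ZFSet.{u}) = ∅ := by
  ext z; simp [mem_toSet]

lemma toSet_insert (x y : ZFSet.{u}) : (insert x y).toSet = insert x y.toSet := by
  ext z; simp [mem_toSet]




/-- Graph of a meta-level function restricted to `X`. -/
noncomputable def graphOf (g : ZFSet.{u} → ZFSet.{u}) : ZFSet.{u} → ZFSet.{u} :=
  @ZFSet.map g (Classical.allZFSetDefinable _)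

lemma zfsurj_graphOf {g : ZFSet.{u} → ZFSet.{u}} {X Y : ZFSet.{u}}
    (h1 : ∀ x ∈ X, g x ∈ Y) (h2 : ∀ y ∈ Y, ∃ x ∈ X, g x = y) :
    ZFSurj X Y (graphOf g X) := by
  letI := Classical.allZFSetDefinable (fun s : Fin 1 → ZFSet.{u} => g (s 0))
  constructor
  · exact (map_isFunc (f := g)).2 h1
  · intro y hy
    obtain ⟨x, hx, rfl⟩ := h2 y hy
    exact ⟨x, hx, mem_map.2 ⟨x, hx, rfl⟩⟩

lemma exists_zfsurj_iff {X Y : ZFSet.{u}} :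
    (∃ f, ZFSurj X Y f) ↔
      ∃ g : ZFSet.{u} → ZFSet.{u}, (∀ x ∈ X, g x ∈ Y) ∧ ∀ y ∈ Y, ∃ x ∈ X, g x = y := by
  constructor
  · rintro ⟨f, ⟨hsub, huniq⟩, hsurj⟩
    classical
    refine ⟨fun x => if h : ∃ y, ZFSet.pair x y ∈ f then Classical.choose h else ∅, ?_, ?_⟩
    · intro x hx
      obtain ⟨w, hw, -⟩ := huniq x hx
      have h : ∃ y, ZFSet.pair x y ∈ f := ⟨w, hw⟩
      simp only
      rw [dif_pos h]
      have := Classical.choose_spec h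
      exact (pair_mem_prod.1 (hsub this)).2
    · intro y hy
      obtain ⟨x, hx, hxy⟩ := hsurj y hy
      refine ⟨x, hx, ?_⟩
      have h : ∃ y, ZFSet.pair x y ∈ f := ⟨y, hxy⟩
      simp only
      rw [dif_pos h]
      obtain ⟨w, hw, hu⟩ := huniq x hx
      rw [hu _ (Classical.choose_spec h), hu _ hxy]
  · rintro ⟨g, h1, h2⟩
    exact ⟨_, zfsurj_graphOf h1 h2⟩

lemma card_le_of_zfsurj {X Y f : ZFSet.{u}} (h : ZFSurj X Y f) :
    Cardinal.mk Y.toSet ≤ #X.toSet := by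
  obtain ⟨g, h1, h2⟩ := exists_zfsurj_iff.1 ⟨f, h⟩
  have : Function.Surjective (fun x : X.toSet => (⟨g x.1, h1 x.1 x.2⟩ : Y.toSet)) := by
    rintro ⟨y, hy⟩
    obtain ⟨x, hx, hxy⟩ := h2 y hy
    exact ⟨⟨x, hx⟩, Subtype.ext hxy⟩
  exact Cardinal.mk_le_of_surjective this

lemma exists_zfsurj_of_card {X Y : ZFSet.{u}} (hne : Y.toSet.Nonempty)
    (h : #Y.toSet ≤ #X.toSet) : ∃ f, ZFSurj X Y f := by
  classical
  obtain ⟨i⟩ := Cardinal.le_def _ _ |>.1 h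
  haveI : Nonempty Y.toSet := hne.to_subtype
  have hsurj : Function.Surjective (Function.invFun i) :=
    Function.invFun_surjective i.injective
  refine exists_zfsurj_iff.2
    ⟨fun x => if hx : x ∈ X then ((Function.invFun i ⟨x, hx⟩ : Y.toSet) : ZFSet) else ∅, ?_, ?_⟩
  · intro x hx
    simp only
    rw [dif_pos hx]
    exact (Function.invFun i ⟨x, hx⟩).2
  · intro y hy
    obtain ⟨⟨x, hx⟩, hxy⟩ := hsurj ⟨y, hy⟩
    have hx' : x ∈ X := hx
    refine ⟨x, hx', ?_⟩
    simp only
    rw [dif_pos hx']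
    exact congrArg Subtype.val hxy


/-- The equiv between members of `powerset X` and subsets of `X.toSet`. -/
noncomputable def powEquiv (X : ZFSet.{u}) : (powerset X).toSet ≃ Set X.toSet where
  toFun Y := {z : X.toSet | (z : ZFSet) ∈ (Y : ZFSet)}
  invFun S := ⟨X.sep (fun z => ∃ h : z ∈ X, (⟨z, h⟩ : X.toSet) ∈ S), by
    rw [mem_toSet, mem_powerset]
    intro z hz
    exact (mem_sep.1 hz).1⟩
  left_inv := by
    rintro ⟨Y, hY⟩
    rw [mem_toSet, mem_powerset] at hY
    apply Subtype.ext
    simp only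
    apply ZFSet.ext
    intro z
    rw [mem_sep]
    constructor
    · rintro ⟨hzX, h, hz⟩
      exact hz
    · intro hz
      exact ⟨hY hz, hY hz, hz⟩
  right_inv := by
    intro S
    ext ⟨z, hz⟩
    simp only [Set.mem_setOf_eq, mem_sep]
    constructor
    · rintro ⟨-, h, hS⟩
      exact hS
    · intro hS
      exact ⟨hz, hz, hS⟩

lemma card_powerset (X : ZFSet.{u}) : #(powerset X).toSet = 2 ^ #X.toSet := by
  rw [Cardinal.mk_congr (powEquiv X), Cardinal.mk_set]

/-- The `n`-th von Neumann natural as a `ZFSet`. -/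
def omegaNat : ℕ → ZFSet.{u} := fun n => ZFSet.mk (PSet.ofNat n)

lemma omegaNat_zero : omegaNat.{u} 0 = ∅ := rfl

lemma omegaNat_succ (n : ℕ) : omegaNat.{u} (n + 1) = insert (omegaNat n) (omegaNat n) := rfl

lemma omegaNat_mem_omega (n : ℕ) : omegaNat.{u} n ∈ omega.{u} := by
  induction n with
  | zero => exact omega_zero
  | succ n ih => rw [omegaNat_succ]; exact omega_succ ih

lemma mem_omega {x : ZFSet.{u}} : x ∈ omega.{u} ↔ ∃ n : ℕ, x = omegaNat n := by
  constructor
  · refine Quotient.inductionOn x ?_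
    intro p hp
    obtain ⟨b, hb⟩ := mk_mem_iff.1 hp
    exact ⟨b.down, Quotient.sound hb⟩
  · rintro ⟨n, rfl⟩
    exact omegaNat_mem_omega n

lemma mem_omegaNat {x : ZFSet.{u}} {n : ℕ} :
    x ∈ omegaNat.{u} n ↔ ∃ m < n, x = omegaNat m := by
  induction n with
  | zero => simp [omegaNat_zero]
  | succ n ih =>
    rw [omegaNat_succ, mem_insert_iff, ih]
    constructor
    · rintro (rfl | ⟨m, hm, rfl⟩)
      · exact ⟨n, Nat.lt_succ_self n, rfl⟩
      · exact ⟨m, hm.trans (Nat.lt_succ_self n), rfl⟩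
    · rintro ⟨m, hm, rfl⟩
      rcases Nat.lt_succ_iff_lt_or_eq.1 hm with h | rfl
      · exact Or.inr ⟨m, h, rfl⟩
      · exact Or.inl rfl

lemma omegaNat_mem_of_lt {m n : ℕ} (h : m < n) : omegaNat.{u} m ∈ omegaNat.{u} n :=
  mem_omegaNat.2 ⟨m, h, rfl⟩

lemma omegaNat_injective : Function.Injective omegaNat.{u} := by
  intro m n h
  by_contra hne
  rcases Nat.lt_or_ge m n with hlt | hge
  · exact mem_irrefl _ (h ▸ omegaNat_mem_of_lt hlt)
  · exact mem_irrefl _ (h ▸ omegaNat_mem_of_lt (lt_of_le_of_ne hge (Ne.symm hne)))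

lemma omega_isTransitive : IsTransitive omega.{u} := by
  intro y hy
  obtain ⟨n, rfl⟩ := mem_omega.1 hy
  intro z hz
  obtain ⟨m, -, rfl⟩ := mem_omegaNat.1 hz
  exact omegaNat_mem_omega m

noncomputable def omegaEquiv : ℕ ≃ omega.{u}.toSet :=
  Equiv.ofBijective (fun n => ⟨omegaNat n, omegaNat_mem_omega n⟩)
    ⟨fun m n h => omegaNat_injective (congrArg Subtype.val h),
     fun ⟨x, hx⟩ => by
      obtain ⟨n, rfl⟩ := mem_omega.1 hx
      exact ⟨n, rfl⟩⟩

lemma card_omega : #omega.{u}.toSet = ℵ₀ := by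
  haveI : Countable omega.{u}.toSet := Countable.of_equiv ℕ omegaEquiv
  haveI : Infinite omega.{u}.toSet := Infinite.of_injective _ omegaEquiv.injective
  exact Cardinal.mk_eq_aleph0 _


lemma hfin_iff {x : ZFSet.{u}} : HFin x ↔ x.toSet.Finite ∧ ∀ y ∈ x, HFin y := by
  unfold HFin
  rw [WellFounded.fix_eq]

def vN : ℕ → ZFSet.{u}
  | 0 => ∅
  | n + 1 => ZFSet.powerset (vN n)

lemma vN_subset_succ (n : ℕ) : vN.{u} n ⊆ vN.{u} (n + 1) := by
  induction n with
  | zero => intro z hz; exact absurd hz (notMem_empty z)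
  | succ n ih =>
    intro z hz
    rw [show vN.{u} (n+1+1) = ZFSet.powerset (vN (n+1)) from rfl, mem_powerset]
    rw [show vN.{u} (n+1) = ZFSet.powerset (vN n) from rfl, mem_powerset] at hz
    exact hz.trans ih

lemma vN_mono {m n : ℕ} (h : m ≤ n) : vN.{u} m ⊆ vN.{u} n := by
  induction h with
  | refl => exact fun z hz => hz
  | step _ ih => exact fun z hz => vN_subset_succ _ (ih hz)

lemma vN_finite (n : ℕ) : (vN.{u} n).toSet.Finite := by
  induction n with
  | zero => rw [show vN.{u} 0 = ∅ from rfl, toSet_empty]; exact Set.finite_empty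
  | succ n ih =>
    haveI : Finite (vN.{u} n).toSet := ih.to_subtype
    haveI : Finite (Set (vN.{u} n).toSet) := inferInstance
    rw [← Set.finite_coe_iff]
    exact Finite.of_equiv _ (powEquiv (vN.{u} n)).symm

lemma hfin_mem_vN {x : ZFSet.{u}} (h : HFin x) : ∃ n, x ∈ vN.{u} n := by
  induction x using ZFSet.mem_wf.induction with
  | _ x IH =>
    obtain ⟨hfin, hmem⟩ := hfin_iff.1 h
    have hy : ∀ y : x.toSet, ∃ n, (y : ZFSet) ∈ vN.{u} n :=
      fun y => IH y y.2 (hmem y y.2)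
    choose N hN using hy
    haveI : Finite x.toSet := hfin.to_subtype
    obtain ⟨M, hM⟩ := (Set.finite_range N).bddAbove
    refine ⟨M + 1, ?_⟩
    rw [show vN.{u} (M+1) = ZFSet.powerset (vN M) from rfl, mem_powerset]
    intro z hz
    exact vN_mono (hM (Set.mem_range_self ⟨z, hz⟩)) (hN ⟨z, hz⟩)

lemma card_le_aleph0_of_hfin {X : ZFSet.{u}} (hX : ∀ y, y ∈ X ↔ HFin y) :
    Cardinal.mk X.toSet ≤ ℵ₀ := by
  have hsub : X.toSet ⊆ ⋃ n : ℕ, (vN.{u} n).toSet := by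
    intro z hz
    obtain ⟨n, hn⟩ := hfin_mem_vN ((hX z).1 hz)
    exact Set.mem_iUnion.2 ⟨n, hn⟩
  have hcount : (⋃ n : ℕ, (vN.{u} n).toSet).Countable :=
    Set.countable_iUnion fun n => (vN_finite n).countable
  rw [Cardinal.mk_le_aleph0_iff]
  rw [Set.countable_coe_iff]
  exact hcount.mono hsub

lemma hfin_omegaNat (n : ℕ) : HFin (omegaNat.{u} n) := by
  induction n with
  | zero =>
    rw [omegaNat_zero, hfin_iff]
    exact ⟨by rw [toSet_empty]; exact Set.finite_empty,
      fun y hy => absurd hy (notMem_empty y)⟩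
  | succ n ih =>
    rw [omegaNat_succ, hfin_iff]
    constructor
    · rw [toSet_insert]
      exact ((hfin_iff.1 ih).1).insert _
    · intro y hy
      rcases mem_insert_iff.1 hy with rfl | hy
      · exact ih
      · exact (hfin_iff.1 ih).2 y hy

/-! ### transitive closure -/

lemma mem_transCl {x y : ZFSet.{0}} : y ∈ transCl x ↔ ∃ n, y ∈ iterUnion x n := by
  rw [transCl]
  constructor
  · intro h
    obtain ⟨w, hw, hyw⟩ := mem_sUnion.1 h
    obtain ⟨n, rfl⟩ := mem_range.1 hw
    exact ⟨n, hyw⟩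
  · rintro ⟨n, hn⟩
    exact mem_sUnion.2 ⟨_, mem_range.2 ⟨n, rfl⟩, hn⟩

lemma subset_transCl {x : ZFSet.{0}} : x ⊆ transCl x :=
  fun _ hy => mem_transCl.2 ⟨0, hy⟩

lemma transCl_isTransitive (x : ZFSet.{0}) : IsTransitive (transCl x) := by
  intro y hy z hz
  obtain ⟨n, hn⟩ := mem_transCl.1 hy
  exact mem_transCl.2 ⟨n + 1, mem_sUnion_of_mem hz hn⟩

lemma transCl_subset {x T : ZFSet.{0}} (hT : IsTransitive T) (h : x ⊆ T) :
    transCl x ⊆ T := by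
  have key : ∀ n, iterUnion x n ⊆ T := by
    intro n
    induction n with
    | zero => exact h
    | succ n ih =>
      intro z hz
      obtain ⟨w, hw, hzw⟩ := mem_sUnion.1 hz
      exact hT.mem_trans hzw (ih hw)
  intro y hy
  obtain ⟨n, hn⟩ := mem_transCl.1 hy
  exact key n hn

lemma mem_transCl_singleton (Y : ZFSet.{0}) : Y ∈ transCl {Y} :=
  subset_transCl (mem_singleton.2 rfl)

lemma transCl_singleton_of_transitive {Y : ZFSet.{0}} (h : IsTransitive Y) :
    transCl {Y} = insert Y Y := by
  have h1 : IsTransitive (insert Y Y) := by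
    intro z hz w hw
    rcases mem_insert_iff.1 hz with rfl | hz
    · exact mem_insert_iff.2 (Or.inr hw)
    · exact mem_insert_iff.2 (Or.inr (h.mem_trans hw hz))
  apply ZFSet.ext
  intro z
  constructor
  · intro hz
    refine transCl_subset h1 ?_ hz
    intro w hw
    rw [mem_singleton] at hw
    subst hw
    exact mem_insert_iff.2 (Or.inl rfl)
  · intro hz
    rcases mem_insert_iff.1 hz with rfl | hz
    · exact mem_transCl_singleton z
    · exact (transCl_isTransitive _).subset_of_mem (mem_transCl_singleton Y) hz

lemma transCl_singleton_subset {A T : ZFSet.{0}} (hT : IsTransitive T) (hA : A ∈ T) :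
    transCl {A} ⊆ T := by
  refine transCl_subset hT ?_
  intro w hw
  rw [mem_singleton] at hw
  exact hw ▸ hA

/-! ### Mostowski-style uniqueness of enumerated transitive sets -/

lemma collapse_unique {T T' : ZFSet.{0}} (hT : IsTransitive T) (hT' : IsTransitive T')
    {e e' : ℕ → ZFSet.{0}}
    (he : ∀ z ∈ T, ∃ m, e m = z) (hrange : ∀ n, e n ∈ T)
    (he' : ∀ z ∈ T', ∃ m, e' m = z) (hrange' : ∀ n, e' n ∈ T')
    (hR : ∀ m n, e m ∈ e n ↔ e' m ∈ e' n) : ∀ n, e n = e' n := by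
  have hwf : WellFounded (fun m n : ℕ => e m ∈ e n) := InvImage.wf e ZFSet.mem_wf
  intro n
  induction n using hwf.induction with
  | _ n IH =>
    apply ZFSet.ext
    intro z
    constructor
    · intro hz
      obtain ⟨m, rfl⟩ := he z (hT.mem_trans hz (hrange n))
      rw [IH m hz]
      exact (hR m n).1 hz
    · intro hz
      obtain ⟨m, rfl⟩ := he' z (hT'.mem_trans hz (hrange' n))
      have hmem : e m ∈ e n := (hR m n).2 hz
      rw [← IH m hmem]
      exact hmem

/-- Any set all of whose members have countable transitive closure of their singleton injects
into the powerset of omega. -/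
lemma card_le_pow_omega {W : ZFSet.{0}}
    (hW : ∀ Y ∈ W, #(transCl {Y}).toSet ≤ ℵ₀) :
    Cardinal.mk W.toSet ≤ #(ZFSet.powerset omega.{0}).toSet := by
  classical
  have key : ∀ Y : W.toSet, ∃ e : ℕ → ZFSet.{0},
      (∀ n, e n ∈ transCl {(Y : ZFSet)}) ∧
      (∀ z ∈ transCl {(Y : ZFSet)}, ∃ m, e m = z) ∧ e 0 = (Y : ZFSet) := by
    rintro ⟨Y, hY⟩
    have hcnt : (transCl {Y}).toSet.Countable := by
      rw [← Set.countable_coe_iff]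
      exact Cardinal.mk_le_aleph0_iff.1 (hW Y hY)
    obtain ⟨f, hf⟩ := hcnt.exists_eq_range ⟨Y, mem_transCl_singleton Y⟩
    refine ⟨fun n => Nat.casesOn n Y (fun m => (f m : ZFSet)), ?_, ?_, rfl⟩
    · rintro (_ | n)
      · exact mem_transCl_singleton Y
      · have : (f n : ZFSet) ∈ (transCl {Y}).toSet := by
          rw [hf]; exact Set.mem_range_self n
        exact this
    · intro z hz
      have : z ∈ Set.range f := by rw [← hf]; exact hz
      obtain ⟨m, hm⟩ := this
      exact ⟨m + 1, hm⟩
  choose e he1 he2 he3 using key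
  set c : W.toSet → (ZFSet.powerset omega.{0}).toSet := fun Y =>
    ⟨ZFSet.sep (fun z => ∃ m k : ℕ, z = omegaNat (Nat.pair m k) ∧ e Y m ∈ e Y k) omega.{0}, by
      rw [mem_toSet, mem_powerset]
      intro z hz
      exact (mem_sep.1 hz).1⟩ with hc
  have hinj : Function.Injective c := by
    intro Y Y' h
    have hsets := congrArg Subtype.val h
    simp only [hc] at hsets
    have hR : ∀ m k, e Y m ∈ e Y k ↔ e Y' m ∈ e Y' k := by
      have main : ∀ Z Z' : W.toSet,
          ZFSet.sep (fun z => ∃ m k : ℕ, z = omegaNat (Nat.pair m k) ∧ e Z m ∈ e Z k) omega.{0} =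
          ZFSet.sep (fun z => ∃ m k : ℕ, z = omegaNat (Nat.pair m k) ∧ e Z' m ∈ e Z' k) omega.{0} →
          ∀ m k, e Z m ∈ e Z k → e Z' m ∈ e Z' k := by
        intro Z Z' hZZ m k hmk
        have h1 : omegaNat (Nat.pair m k) ∈
            ZFSet.sep (fun z => ∃ m k : ℕ, z = omegaNat (Nat.pair m k) ∧ e Z m ∈ e Z k)
              omega.{0} :=
          mem_sep.2 ⟨omegaNat_mem_omega _, m, k, rfl, hmk⟩
        rw [hZZ] at h1
        obtain ⟨-, m', k', heq, h'⟩ := mem_sep.1 h1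
        obtain ⟨rfl, rfl⟩ := Nat.pair_eq_pair.1 (omegaNat_injective heq)
        exact h'
      exact fun m k => ⟨main Y Y' hsets m k, main Y' Y hsets.symm m k⟩
    have := collapse_unique (transCl_isTransitive ({(Y : ZFSet)} : ZFSet))
      (transCl_isTransitive ({(Y' : ZFSet)} : ZFSet))
      (he2 Y) (he1 Y) (he2 Y') (he1 Y') hR 0
    rw [he3 Y, he3 Y'] at this
    exact Subtype.ext this
  exact Cardinal.mk_le_of_injective hinj
lemma isOrd_empty : IsOrd (∅ : ZFSet.{u}) :=
  ⟨isTransitive_empty, fun y hy => absurd hy (notMem_empty y),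
    fun a ha => absurd ha (notMem_empty a)⟩

lemma IsOrd.of_mem {a b : ZFSet.{u}} (ha : IsOrd a) (hb : b ∈ a) : IsOrd b := by
  have hsub : b ⊆ a := ha.1.subset_of_mem hb
  refine ⟨?_, ?_, ?_⟩
  · intro y hy z hz
    exact ha.2.2 z (ha.1.subset_of_mem (hsub hy) hz) y (hsub hy) b hb hz hy
  · intro y hy z hz
    exact ha.2.1 y (hsub hy) z (hsub hz)
  · intro x hx y hy z hz
    exact ha.2.2 x (hsub hx) y (hsub hy) z (hsub hz)

lemma mem_of_ssubset' {a b : ZFSet.{u}} (ha : IsTransitive a) (hb : IsOrd b)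
    (hab : a ⊆ b) (hne : a ≠ b) : a ∈ b := by
  classical
  set D := ZFSet.sep (fun z => z ∉ a) b with hD
  have hDne : D ≠ ∅ := by
    intro h0
    apply hne
    apply ZFSet.ext
    intro z
    constructor
    · exact fun hz => hab hz
    · intro hz
      by_contra hza
      have : z ∈ D := mem_sep.2 ⟨hz, hza⟩
      rw [h0] at this
      exact notMem_empty z this
  obtain ⟨c, hcD, hmin⟩ := ZFSet.regularity D hDne
  obtain ⟨hcb, hca⟩ := mem_sep.1 hcD
  have hsub : c ⊆ a := by
    intro x hx
    by_contra hxa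
    have hxD : x ∈ D := mem_sep.2 ⟨hb.1.subset_of_mem hcb hx, hxa⟩
    have : x ∈ D ∩ c := mem_inter.2 ⟨hxD, hx⟩
    rw [hmin] at this
    exact notMem_empty x this
  have hsup : a ⊆ c := by
    intro x hx
    rcases hb.2.1 x (hab hx) c hcb with h | rfl | h
    · exact h
    · exact absurd hx hca
    · exact absurd (ha.subset_of_mem hx h) hca
  have : a = c := ZFSet.ext fun z => ⟨fun h => hsup h, fun h => hsub h⟩
  exact this ▸ hcb

lemma IsOrd.trichotomy {a b : ZFSet.{u}} (ha : IsOrd a) (hb : IsOrd b) :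
    a ∈ b ∨ a = b ∨ b ∈ a := by
  have hc : IsTransitive (a ∩ b) := ha.1.inter hb.1
  have hca : a ∩ b ⊆ a := fun z hz => (mem_inter.1 hz).1
  have hcb : a ∩ b ⊆ b := fun z hz => (mem_inter.1 hz).2
  by_cases h1 : a ∩ b = a
  · by_cases h2 : a = b
    · exact Or.inr (Or.inl h2)
    · refine Or.inl (mem_of_ssubset' ha.1 hb ?_ h2)
      intro z hz
      exact hcb (h1.symm ▸ hz)
  · by_cases h2 : a ∩ b = b
    · refine Or.inr (Or.inr (mem_of_ssubset' hb.1 ha ?_ ?_))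
      · intro z hz
        exact hca (h2.symm ▸ hz)
      · intro hba
        exact h1 (by rw [hba] at h2 ⊢; exact h2)
    · exfalso
      have m1 : a ∩ b ∈ a := mem_of_ssubset' hc ha hca h1
      have m2 : a ∩ b ∈ b := mem_of_ssubset' hc hb hcb h2
      exact mem_irrefl _ (mem_inter.2 ⟨m1, m2⟩)

/-! ## Statement 12 -/

theorem stmt12 (F : Ordinal → ZFSet) (hF : IsNHierarchy F) :
    (∃ f, ZFSurj (F 1) (ZFSet.powerset ZFSet.omega) f) ∧
    (∃ f, ZFSurj (ZFSet.powerset ZFSet.omega) (F 1) f) ∧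
    (∀ o : ZFSet, IsOrd o → o ≠ ∅ →
      (o ∈ F 2 ↔ ∃ f, ZFSurj (ZFSet.powerset ZFSet.omega) o f)) ∧
    (∃ Θ : ZFSet, IsOrd Θ ∧ ¬ CardLE Θ (ZFSet.powerset ZFSet.omega) ∧
      (∀ o ∈ Θ, CardLE o (ZFSet.powerset ZFSet.omega)) ∧
      (∀ Y, Y ∈ Θ ↔ IsOrd Y ∧ Y ∈ F 2)) := by
  classical
  obtain ⟨h0, h1, h2, -⟩ := hF
  have h2' : ∀ Y, Y ∈ F 2 ↔ MemH (F 1) Y := by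
    have h := h2 0
    simp only [zero_add] at h
    exact h
  set P := ZFSet.powerset ZFSet.omega with hPdef
  have cardP : #P.toSet = 2 ^ (ℵ₀ : Cardinal) := by
    rw [hPdef, card_powerset, card_omega]
  have haleP : (ℵ₀ : Cardinal) ≤ #P.toSet := by
    rw [cardP]
    exact (Cardinal.cantor ℵ₀).le
  have cardF0_le : #(F 0).toSet ≤ ℵ₀ := card_le_aleph0_of_hfin h0
  have cardF0_ge : (ℵ₀ : Cardinal) ≤ #(F 0).toSet := by
    rw [← card_omega]
    refine Cardinal.mk_le_mk_of_subset ?_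
    intro z hz
    obtain ⟨n, rfl⟩ := mem_omega.1 hz
    exact (h0 _).2 (hfin_omegaNat n)
  have memF1_iff : ∀ Y, Y ∈ F 1 ↔ #(transCl {Y}).toSet ≤ ℵ₀ := by
    intro Y
    rw [h1]
    show (∃ f, ZFSurj (F 0) (transCl {Y}) f) ↔ _
    constructor
    · rintro ⟨f, hf⟩
      exact (card_le_of_zfsurj hf).trans cardF0_le
    · intro h
      exact exists_zfsurj_of_card ⟨Y, mem_transCl_singleton Y⟩ (h.trans cardF0_ge)
  have psub : P ⊆ F 1 := by
    intro A hA
    rw [memF1_iff]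
    have hTins : IsTransitive (insert A ZFSet.omega) := by
      intro z hz w hw
      rcases mem_insert_iff.1 hz with rfl | hz
      · exact mem_insert_iff.2 (Or.inr (mem_powerset.1 hA hw))
      · exact mem_insert_iff.2 (Or.inr (omega_isTransitive.subset_of_mem hz hw))
    have hsub : transCl {A} ⊆ insert A ZFSet.omega :=
      transCl_singleton_subset hTins (mem_insert _ _)
    have hle : #(transCl {A}).toSet ≤ #(insert A ZFSet.omega).toSet :=
      Cardinal.mk_le_mk_of_subset fun z hz => hsub hz
    refine hle.trans ?_
    rw [toSet_insert]
    refine Cardinal.mk_insert_le.trans ?_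
    rw [card_omega]
    exact le_of_eq (Cardinal.add_one_eq le_rfl)
  have hPne : P.toSet.Nonempty :=
    ⟨∅, by rw [mem_toSet, hPdef, mem_powerset]; exact fun z hz => absurd hz (notMem_empty z)⟩
  have cardF1_ge : #P.toSet ≤ #(F 1).toSet :=
    Cardinal.mk_le_mk_of_subset fun z hz => psub hz
  have cardF1_le : #(F 1).toSet ≤ #P.toSet :=
    card_le_pow_omega fun Y hY => (memF1_iff Y).1 hY
  have hF1ne : (F 1).toSet.Nonempty := hPne.mono fun z hz => psub hz
  have part1 : ∃ f, ZFSurj (F 1) P f := exists_zfsurj_of_card hPne cardF1_ge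
  have part2 : ∃ f, ZFSurj P (F 1) f := exists_zfsurj_of_card hF1ne cardF1_le
  have memF2_iff : ∀ Y, Y ∈ F 2 ↔ #(transCl {Y}).toSet ≤ #P.toSet := by
    intro Y
    rw [h2' Y]
    show (∃ f, ZFSurj (F 1) (transCl {Y}) f) ↔ _
    constructor
    · rintro ⟨f, hf⟩
      exact (card_le_of_zfsurj hf).trans cardF1_le
    · intro h
      exact exists_zfsurj_of_card ⟨Y, mem_transCl_singleton Y⟩ (h.trans cardF1_ge)
  have ordF2 : ∀ o : ZFSet, IsTransitive o → (o ∈ F 2 ↔ #o.toSet ≤ #P.toSet) := by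
    intro o ho
    rw [memF2_iff, transCl_singleton_of_transitive ho]
    constructor
    · intro h
      refine le_trans (Cardinal.mk_le_mk_of_subset ?_) h
      intro z hz
      exact mem_insert_iff.2 (Or.inr hz)
    · intro h
      calc #(insert o o).toSet ≤ #o.toSet + 1 := by
            rw [toSet_insert]; exact Cardinal.mk_insert_le
        _ ≤ #P.toSet + 1 := add_le_add_left h 1
        _ = #P.toSet := Cardinal.add_one_eq haleP
  have part3 : ∀ o : ZFSet, IsOrd o → o ≠ ∅ → (o ∈ F 2 ↔ ∃ f, ZFSurj P o f) := by
    intro o ho hne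
    have hone : o.toSet.Nonempty := by
      rcases ZFSet.eq_empty_or_nonempty o with rfl | h
      · exact absurd rfl hne
      · exact h
    rw [ordF2 o ho.1]
    constructor
    · intro h
      exact exists_zfsurj_of_card hone h
    · rintro ⟨f, hf⟩
      exact card_le_of_zfsurj hf
  refine ⟨part1, part2, part3, ZFSet.sep IsOrd (F 2), ?_, ?_, ?_, ?_⟩
  case refine_4 =>
    intro Y
    rw [mem_sep]
    exact and_comm
  all_goals
    have hΘ : ∀ Y, Y ∈ ZFSet.sep IsOrd (F 2) ↔ IsOrd Y ∧ Y ∈ F 2 := by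
      intro Y; rw [mem_sep]; exact and_comm
  all_goals
    have hemptyΘ : (∅ : ZFSet) ∈ ZFSet.sep IsOrd (F 2) := by
      refine (hΘ ∅).2 ⟨isOrd_empty, (ordF2 ∅ isTransitive_empty).2 ?_⟩
      rw [toSet_empty, Cardinal.mk_emptyCollection]
      exact zero_le
  all_goals
    have hΘord : IsOrd (ZFSet.sep IsOrd (F 2)) := by
      refine ⟨?_, ?_, ?_⟩
      · intro o ho o' ho'
        obtain ⟨hoOrd, hoF2⟩ := (hΘ o).1 ho
        refine (hΘ o').2 ⟨hoOrd.of_mem ho', ?_⟩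
        refine (ordF2 o' (hoOrd.of_mem ho').1).2 ?_
        refine le_trans (Cardinal.mk_le_mk_of_subset ?_) ((ordF2 o hoOrd.1).1 hoF2)
        intro z hz
        exact hoOrd.1.subset_of_mem ho' hz
      · intro y hy z hz
        exact IsOrd.trichotomy ((hΘ y).1 hy).1 ((hΘ z).1 hz).1
      · intro a _ b _ c hc hab hbc
        exact ((hΘ c).1 hc).1.1.mem_trans hab hbc
  case refine_1 => exact hΘord
  case refine_2 =>
    rintro (hemp | ⟨f, hf⟩)
    · rw [hemp] at hemptyΘ
      exact notMem_empty _ hemptyΘ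
    · have hcard : #(ZFSet.sep IsOrd (F 2)).toSet ≤ #P.toSet := card_le_of_zfsurj hf
      have : ZFSet.sep IsOrd (F 2) ∈ F 2 := (ordF2 _ hΘord.1).2 hcard
      exact mem_irrefl _ ((hΘ _).2 ⟨hΘord, this⟩)
  case refine_3 =>
    intro o ho
    obtain ⟨hoOrd, hoF2⟩ := (hΘ o).1 ho
    by_cases ho0 : o = ∅
    · exact Or.inl ho0
    · exact Or.inr ((part3 o hoOrd ho0).1 hoF2)

end NairianModels
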